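/- Let A be a finite-dimensional algebra over a field k and let Q be a finite quiver with vertex set Q_0. A module M over A ⊗_k kQ lies in the monomorphism category if and only if for every vertex i the map ⊕_{α : t(α)=i} M_{s(α)} → M_i, given componentwise by the action of the arrows α, is injective. Show: if M and N lie in the monomorphism category and 0 → M → E → N → 0 is a short exact sequence of A ⊗_k kQ-modules, then E lies in the monomorphism category (i.e. the monomorphism category is extension-closed). -/
import Mathlib


/-- The monomorphism category is extension-closed.  Here a module over
`A ⊗_k kQ` for a finite quiver `Q` (vertex set `V`, arrows `E i j` from `i` to `j`) over a
finite-dimensional `k`-algebra `A` is encoded as a representation: an `A`-module `M i` at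
each vertex and `A`-linear maps `Mf i j a : M i → M j` for each arrow `a : E i j`.  It lies
in the monomorphism category iff for every vertex `i` the in-map
`⊕_{a : t(a) = i} M_{s(a)} → M i`, `u ↦ ∑ Mf a (u a)`, is injective (equivalently, has zero
kernel).  If `M` and `N` lie in the monomorphism category and
`0 → M →φ X →ψ N → 0` is a short exact sequence of representations, then `X` lies in the
monomorphism category. -/
theorem stmt_7 {k : Type} [Field k] {A : Type} [Ring A] [Algebra k A] [FiniteDimensional k A]
    {V : Type} [Fintype V] (E : V → V → Type) [∀ i j, Fintype (E i j)]
    (M N X : V → Type)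
    [∀ i, AddCommGroup (M i)] [∀ i, Module A (M i)]
    [∀ i, AddCommGroup (N i)] [∀ i, Module A (N i)]
    [∀ i, AddCommGroup (X i)] [∀ i, Module A (X i)]
    (Mf : ∀ i j, E i j → (M i →ₗ[A] M j))
    (Nf : ∀ i j, E i j → (N i →ₗ[A] N j))
    (Xf : ∀ i j, E i j → (X i →ₗ[A] X j))
    -- the short exact sequence `0 → M → X → N → 0` of representations:
    (φ : ∀ i, M i →ₗ[A] X i) (ψ : ∀ i, X i →ₗ[A] N i)
    (hφcomm : ∀ i j (a : E i j) (x : M i), φ j (Mf i j a x) = Xf i j a (φ i x))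
    (hψcomm : ∀ i j (a : E i j) (x : X i), ψ j (Xf i j a x) = Nf i j a (ψ i x))
    (hφinj : ∀ i, Function.Injective (φ i))
    (hψsurj : ∀ i, Function.Surjective (ψ i))
    (hexact : ∀ i (x : X i), ψ i x = 0 ↔ x ∈ LinearMap.range (φ i))
    -- `M` and `N` lie in the monomorphism category:
    (hM : ∀ i (u : ∀ j, E j i → M j),
      (∑ j, ∑ a : E j i, Mf j i a (u j a)) = 0 → ∀ j a, u j a = 0)
    (hN : ∀ i (u : ∀ j, E j i → N j),
      (∑ j, ∑ a : E j i, Nf j i a (u j a)) = 0 → ∀ j a, u j a = 0) :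
    -- then `X` lies in the monomorphism category:
    ∀ i (u : ∀ j, E j i → X j),
      (∑ j, ∑ a : E j i, Xf j i a (u j a)) = 0 → ∀ j a, u j a = 0 := by
  intro i u hu
  -- push to N: each ψ (u j a) = 0
  have hψu : ∀ j a, ψ j (u j a) = 0 := by
    apply hN i (fun j a => ψ j (u j a))
    have := congrArg (ψ i) hu
    simpa [map_sum, hψcomm] using this
  -- lift to M
  choose v hv using fun j a => (hexact j (u j a)).mp (hψu j a)
  have hv0 : ∀ j a, v j a = 0 := by
    apply hM i
    apply hφinj i
    have : (∑ j, ∑ a : E j i, Xf j i a (φ j (v j a))) = 0 := by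
      simpa [hv] using hu
    simpa [map_sum, hφcomm] using this
  intro j a
  rw [← hv j a, hv0 j a, map_zero]
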